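/- Let (Ω, 𝒜, P) be a probability space, let S be a finite Borel measure on S^{d-1}_+, and let (Ŝ_n)_{n∈ℕ} be random finite Borel measures on S^{d-1}_+ defined on (Ω, 𝒜, P) such that for every continuous f: S^{d-1}_+ → ℝ the random variables ∫ f(a) Ŝ_n(da) converge in probability to ∫ f(a) S(da). Let K ⊆ ℝ^m be a nonempty compact set and c: K × S^{d-1}_+ → ℝ a continuous function. Then for any sequence of random elements θ̂_n: Ω → K satisfying ∫ c(θ̂_n(ω), a) Ŝ_n(ω)(da) = inf_{θ∈K} ∫ c(θ, a) Ŝ_n(ω)(da) for all ω and n, the random variables ∫ c(θ̂_n, a) S(da) converge in probability to inf_{θ∈K} ∫ c(θ, a) S(da) as n → ∞. -/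

import Mathlib

open MeasureTheory Filter
open Topology

/-- The positive unit sphere `S^{d-1}_+ = {x ∈ [0,∞)^d : ‖x‖ = 1}` for a norm `N` on `ℝ^d`. -/
abbrev PosSphere (d : ℕ) (N : (Fin d → ℝ) → ℝ) : Type :=
  {x : Fin d → ℝ // (∀ i, 0 ≤ x i) ∧ N x = 1}

theorem posSphere_compactSpace {d : ℕ} (N : (Fin d → ℝ) → ℝ)
    (hN_tri : ∀ x y, N (x + y) ≤ N x + N y)
    (hN_smul : ∀ (c : ℝ) (x), N (c • x) = |c| * N x)
    (hN_def : ∀ x, N x = 0 → x = 0) : CompactSpace (PosSphere d N) := by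
  have hN0 : N 0 = 0 := by
    have := hN_smul 0 0; simpa using this
  have hneg : ∀ x, N (-x) = N x := by
    intro x
    have := hN_smul (-1) x; simpa using this
  have hnonneg : ∀ x, 0 ≤ N x := by
    intro x
    have h1 : N (x + (-x)) ≤ N x + N (-x) := hN_tri _ _
    rw [hneg] at h1
    simp [hN0] at h1
    linarith
  have hsum : ∀ (s : Finset (Fin d)) (g : Fin d → (Fin d → ℝ)),
      N (∑ i ∈ s, g i) ≤ ∑ i ∈ s, N (g i) := by
    intro s g
    induction s using Finset.cons_induction with
    | empty => simp [hN0]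
    | cons a s ha ih =>
      rw [Finset.sum_cons, Finset.sum_cons]
      exact le_trans (hN_tri _ _) (by linarith)
  set C : ℝ := ∑ i : Fin d, N (Pi.single i 1) with hC
  have hCn : 0 ≤ C := Finset.sum_nonneg fun i _ => hnonneg _
  have hle : ∀ z : Fin d → ℝ, N z ≤ C * ‖z‖ := by
    intro z
    have hsingle : ∀ i, Pi.single i (z i) = (z i) • (Pi.single i 1 : Fin d → ℝ) := by
      intro i; funext j
      by_cases h : j = i <;> simp [Pi.single_apply, h]
    calc N z = N (∑ i : Fin d, Pi.single i (z i)) := by rw [Finset.univ_sum_single]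
      _ ≤ ∑ i : Fin d, N (Pi.single i (z i)) := hsum _ _
      _ = ∑ i : Fin d, |z i| * N (Pi.single i 1) := by
          refine Finset.sum_congr rfl fun i _ => ?_
          rw [hsingle i, hN_smul]
      _ ≤ ∑ i : Fin d, ‖z‖ * N (Pi.single i 1) := by
          refine Finset.sum_le_sum fun i _ => ?_
          exact mul_le_mul_of_nonneg_right (by simpa using norm_le_pi_norm z i) (hnonneg _)
      _ = C * ‖z‖ := by
          rw [hC, Finset.sum_mul]
          exact Finset.sum_congr rfl fun i _ => mul_comm _ _
  have hcont : Continuous N := by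
    have hlip : LipschitzWith C.toNNReal N := by
      apply LipschitzWith.of_dist_le_mul
      intro x y
      have h1 : N x - N y ≤ N (x - y) := by
        have := hN_tri (x - y) y; simp at this; linarith
      have h2 : N y - N x ≤ N (x - y) := by
        have := hN_tri (y - x) x; simp at this
        have h3 : N (y - x) = N (x - y) := by rw [← hneg (y - x)]; congr 1; abel
        linarith
      have h4 : dist (N x) (N y) ≤ N (x - y) := by
        rw [Real.dist_eq, abs_le]; constructor <;> linarith
      refine h4.trans ?_
      rw [Real.coe_toNNReal _ hCn]
      calc N (x - y) ≤ C * ‖x - y‖ := hle _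
        _ = C * dist x y := by rw [dist_eq_norm]
    exact hlip.continuous
  set A : Set (Fin d → ℝ) := {x | (∀ i, 0 ≤ x i) ∧ N x = 1} with hA
  have hclosed : IsClosed A := by
    have : A = (⋂ i, {x : Fin d → ℝ | 0 ≤ x i}) ∩ N ⁻¹' {1} := by
      ext x; simp [hA, Set.mem_iInter]
    rw [this]
    exact IsClosed.inter (isClosed_iInter fun i =>
      isClosed_le continuous_const (continuous_apply i))
      (isClosed_singleton.preimage hcont)
  have hcompA : IsCompact A := by
    rcases Set.eq_empty_or_nonempty A with h | ⟨x₀, hx₀⟩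
    · rw [h]; exact isCompact_empty
    · have hx₀ne : x₀ ≠ 0 := by
        intro h
        have h2 := hx₀.2
        rw [h, hN0] at h2
        exact one_ne_zero h2.symm
      have hx₀norm : ‖x₀‖ ≠ 0 := norm_ne_zero_iff.mpr hx₀ne
      have hy₀ : (‖x₀‖⁻¹ • x₀) ∈ Metric.sphere (0 : Fin d → ℝ) 1 := by
        simp [norm_smul, abs_of_nonneg (inv_nonneg.mpr (norm_nonneg x₀)),
          inv_mul_cancel₀ hx₀norm]
      obtain ⟨z, hz, hmin⟩ := (isCompact_sphere (0 : Fin d → ℝ) 1).exists_isMinOn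
        ⟨_, hy₀⟩ hcont.continuousOn
      have hzn : ‖z‖ = 1 := by simpa using hz
      have hδ : 0 < N z := by
        rcases lt_or_eq_of_le (hnonneg z) with h | h
        · exact h
        · exfalso
          have : z = 0 := hN_def z h.symm
          rw [this, norm_zero] at hzn
          exact one_ne_zero hzn.symm
      apply IsCompact.of_isClosed_subset (isCompact_closedBall (0 : Fin d → ℝ) (N z)⁻¹) hclosed
      intro x hx
      have hxne : x ≠ 0 := by
        intro h
        have h2 := hx.2
        rw [h, hN0] at h2
        exact one_ne_zero h2.symm
      have hxnorm : (0:ℝ) < ‖x‖ := norm_pos_iff.mpr hxne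
      have hy : (‖x‖⁻¹ • x) ∈ Metric.sphere (0 : Fin d → ℝ) 1 := by
        simp [norm_smul, abs_of_nonneg (inv_nonneg.mpr (norm_nonneg x)),
          inv_mul_cancel₀ (ne_of_gt hxnorm)]
      have h5 : N z ≤ N (‖x‖⁻¹ • x) := hmin hy
      have h6 : N (‖x‖⁻¹ • x) = ‖x‖⁻¹ := by
        rw [hN_smul, abs_of_nonneg (inv_nonneg.mpr (norm_nonneg x)), hx.2, mul_one]
      rw [h6] at h5
      have h7 : ‖x‖ ≤ (N z)⁻¹ := by
        rw [← inv_inv ‖x‖]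
        exact inv_anti₀ hδ h5
      simpa [Metric.mem_closedBall, dist_eq_norm] using h7
  exact isCompact_iff_compactSpace.mp hcompA


/-- Theorem 2(ii) of the paper: consistency of empirical risk minimization.  If the random
finite measures `Ŝ_n` converge weakly in probability to the finite measure `S`, `K ⊆ ℝ^m`
is compact and nonempty, `c : K × S^{d-1}_+ → ℝ` is continuous, and `θ̂_n` is any sequence
of random elements of `K` minimizing the empirical risk, then the true risk of `θ̂_n`
converges in probability to the minimal true risk. -/
theorem empirical_risk_minimizers_consistent
    {d m : ℕ} (N : (Fin d → ℝ) → ℝ)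
    (hN_tri : ∀ x y, N (x + y) ≤ N x + N y)
    (hN_smul : ∀ (c : ℝ) (x), N (c • x) = |c| * N x)
    (hN_def : ∀ x, N x = 0 → x = 0)
    {Ω : Type} [MeasurableSpace Ω] (P : Measure Ω) [IsProbabilityMeasure P]
    (S : Measure (PosSphere d N)) [IsFiniteMeasure S]
    (Shat : ℕ → Ω → Measure (PosSphere d N))
    (hShat_fin : ∀ n ω, IsFiniteMeasure (Shat n ω))
    (hShat_meas : ∀ (n : ℕ) (f : PosSphere d N → ℝ), Continuous f →
      Measurable fun ω => ∫ a, f a ∂(Shat n ω))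
    (hconv : ∀ f : PosSphere d N → ℝ, Continuous f →
      TendstoInMeasure P (fun n ω => ∫ a, f a ∂(Shat n ω)) atTop
        (fun _ => ∫ a, f a ∂S))
    (K : Set (Fin m → ℝ)) (hK : IsCompact K) (hKne : K.Nonempty)
    (c : K → PosSphere d N → ℝ)
    (hc : Continuous fun q : K × PosSphere d N => c q.1 q.2)
    (θ : ℕ → Ω → K) (hθ_meas : ∀ n, Measurable (θ n))
    (hθ_min : ∀ n ω, ∫ a, c (θ n ω) a ∂(Shat n ω) = ⨅ t : K, ∫ a, c t a ∂(Shat n ω)) :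
    TendstoInMeasure P (fun n ω => ∫ a, c (θ n ω) a ∂S) atTop
      (fun _ => ⨅ t : K, ∫ a, c t a ∂S) := by
  classical
  haveI : CompactSpace (PosSphere d N) := posSphere_compactSpace N hN_tri hN_smul hN_def
  haveI : OpensMeasurableSpace (PosSphere d N) := Subtype.opensMeasurableSpace _
  haveI : Nonempty K := hKne.to_subtype
  haveI : CompactSpace K := isCompact_iff_compactSpace.mp hK
  -- uniform bound on c
  obtain ⟨M, hM⟩ : ∃ M, ∀ (t : K) (a : PosSphere d N), ‖c t a‖ ≤ M := by
    obtain ⟨M, hM⟩ := (isCompact_range hc).isBounded.exists_norm_le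
    exact ⟨M, fun t a => hM _ ⟨(t, a), rfl⟩⟩
  have hc_t : ∀ t : K, Continuous fun a => c t a := fun t => hc.comp (Continuous.prodMk_right t)
  have hint : ∀ (μ : Measure (PosSphere d N)) [IsFiniteMeasure μ] (t : K),
      Integrable (fun a => c t a) μ := fun μ _ t =>
    ⟨(hc_t t).aestronglyMeasurable,
      HasFiniteIntegral.of_bounded (C := M) (Filter.Eventually.of_forall (hM t))⟩
  set R : K → ℝ := fun t => ∫ a, c t a ∂S with hRdef
  set Rn : ℕ → Ω → K → ℝ := fun n ω t => ∫ a, c t a ∂(Shat n ω) with hRndef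
  set MS : ℝ := (S Set.univ).toReal with hMSdef
  have hMS0 : 0 ≤ MS := ENNReal.toReal_nonneg
  set mn : ℕ → Ω → ℝ := fun n ω => ((Shat n ω) Set.univ).toReal with hmndef
  have hmn0 : ∀ n ω, 0 ≤ mn n ω := fun n ω => ENNReal.toReal_nonneg
  have hRb : ∀ t, ‖R t‖ ≤ M * MS := fun t =>
    norm_integral_le_of_norm_le_const (Filter.Eventually.of_forall (hM t))
  have hRnb : ∀ n ω t, ‖Rn n ω t‖ ≤ M * mn n ω := by
    intro n ω t
    haveI := hShat_fin n ω
    exact norm_integral_le_of_norm_le_const (Filter.Eventually.of_forall (hM t))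
  have hRbdd : BddBelow (Set.range R) := by
    refine ⟨-(M * MS), ?_⟩
    rintro _ ⟨t, rfl⟩
    have := (abs_le.mp (hRb t)).1
    linarith [this]
  have hRnbdd : ∀ n ω, BddBelow (Set.range (Rn n ω)) := by
    intro n ω
    refine ⟨-(M * mn n ω), ?_⟩
    rintro _ ⟨t, rfl⟩
    have := (abs_le.mp (hRnb n ω t)).1
    linarith [this]
  -- key deterministic bound
  have key : ∀ (n : ℕ) (ω : Ω) (D : ℝ), 0 ≤ D → (∀ t : K, |Rn n ω t - R t| ≤ D) →
      |R (θ n ω) - ⨅ t : K, R t| ≤ 2 * D := by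
    intro n ω D hD hDt
    have h1 : (⨅ t : K, R t) ≤ R (θ n ω) := ciInf_le hRbdd _
    have h2 : Rn n ω (θ n ω) = ⨅ t : K, Rn n ω t := hθ_min n ω
    have h3 : (⨅ t : K, Rn n ω t) - D ≤ ⨅ t : K, R t := by
      refine le_ciInf fun t => ?_
      have h4 : (⨅ t' : K, Rn n ω t') ≤ Rn n ω t := ciInf_le (hRnbdd n ω) t
      have h5 := (abs_le.mp (hDt t)).2
      linarith
    have h6 := (abs_le.mp (hDt (θ n ω))).1
    have h7 : R (θ n ω) ≤ (⨅ t : K, R t) + 2 * D := by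
      have h8 : Rn n ω (θ n ω) ≤ (⨅ t : K, R t) + D := by
        rw [h2]; linarith [h3]
      linarith
    rw [abs_le]
    constructor <;> linarith
  -- start of convergence proof
  rw [tendstoInMeasure_iff_dist]
  intro ε hε
  show Tendsto (fun n => P {ω | ε ≤ dist (R (θ n ω)) (⨅ t : K, R t)}) atTop (𝓝 0)
  -- uniform continuity of c
  have hUC : UniformContinuous fun q : K × PosSphere d N => c q.1 q.2 :=
    CompactSpace.uniformContinuous_of_continuous hc
  set ε₁ : ℝ := ε / (8 * (MS + 2)) with hε₁def
  have hε₁ : 0 < ε₁ := by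
    apply div_pos hε
    nlinarith
  obtain ⟨δθ, hδθpos, hδθ⟩ := Metric.uniformContinuous_iff.mp hUC ε₁ hε₁
  have hnet : ∀ (t t' : K) (a : PosSphere d N), dist t t' < δθ → |c t a - c t' a| ≤ ε₁ := by
    intro t t' a h
    have hp : dist ((t, a) : K × PosSphere d N) (t', a) < δθ := by
      rw [Prod.dist_eq]
      simpa [dist_self] using (by simpa using max_lt h hδθpos : max (dist t t') 0 < δθ)
    have := hδθ hp
    rw [Real.dist_eq] at this
    exact le_of_lt this
  -- finite net
  obtain ⟨F, hF⟩ := isCompact_univ.elim_finite_subcover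
    (fun t : K => Metric.ball t δθ) (fun t => Metric.isOpen_ball)
    (fun t _ => Set.mem_iUnion.mpr ⟨t, Metric.mem_ball_self hδθpos⟩)
  -- events
  set E : K → ℕ → Set Ω := fun t n => {ω | ε / 8 ≤ dist (Rn n ω t) (R t)} with hEdef
  set Em : ℕ → Set Ω := fun n => {ω | 1 ≤ dist (mn n ω) MS} with hEmdef
  -- inclusion
  have hincl : ∀ n, {ω | ε ≤ dist (R (θ n ω)) (⨅ t : K, R t)} ⊆
      (⋃ t ∈ F, E t n) ∪ Em n := by
    intro n ω hω
    by_contra hbad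
    rw [Set.mem_union, not_or] at hbad
    obtain ⟨hb1, hb2⟩ := hbad
    have hb1' : ∀ t ∈ F, dist (Rn n ω t) (R t) < ε / 8 := by
      intro t ht
      by_contra h
      exact hb1 (Set.mem_biUnion ht (not_lt.mp h))
    have hb2' : mn n ω ≤ MS + 1 := by
      have : dist (mn n ω) MS < 1 := not_le.mp hb2
      rw [Real.dist_eq] at this
      have := (abs_lt.mp this).2
      linarith
    haveI := hShat_fin n ω
    -- uniform bound on |Rn t - R t|
    have hD : ∀ t : K, |Rn n ω t - R t| ≤ 3 * ε / 8 := by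
      intro t
      obtain ⟨i, hiF, hti⟩ : ∃ i ∈ F, t ∈ Metric.ball i δθ := by
        have := hF (Set.mem_univ t)
        simpa using this
      have hdist : dist t i < δθ := Metric.mem_ball.mp hti
      have hA : |Rn n ω t - Rn n ω i| ≤ ε₁ * mn n ω := by
        have hsub : Rn n ω t - Rn n ω i = ∫ a, (c t a - c i a) ∂(Shat n ω) := by
          rw [hRndef]
          exact (integral_sub (hint _ t) (hint _ i)).symm
        rw [hsub, ← Real.norm_eq_abs]
        exact norm_integral_le_of_norm_le_const
          (Filter.Eventually.of_forall fun a => by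
            simpa [Real.norm_eq_abs] using hnet t i a hdist)
      have hB : |R t - R i| ≤ ε₁ * MS := by
        have hsub : R t - R i = ∫ a, (c t a - c i a) ∂S := by
          rw [hRdef]
          exact (integral_sub (hint _ t) (hint _ i)).symm
        rw [hsub, ← Real.norm_eq_abs]
        exact norm_integral_le_of_norm_le_const
          (Filter.Eventually.of_forall fun a => by
            simpa [Real.norm_eq_abs] using hnet t i a hdist)
      have hC' : |Rn n ω i - R i| < ε / 8 := by
        have := hb1' i hiF
        rwa [Real.dist_eq] at this
      have hA' : ε₁ * mn n ω ≤ ε₁ * (MS + 1) :=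
        mul_le_mul_of_nonneg_left hb2' (le_of_lt hε₁)
      have hsmall : ε₁ * (MS + 1) + ε₁ * MS ≤ ε / 4 := by
        have h2 : ε₁ * (2 * MS + 1) ≤ ε₁ * (2 * (MS + 2)) := by
          apply mul_le_mul_of_nonneg_left _ (le_of_lt hε₁)
          linarith
        have h3 : ε₁ * (2 * (MS + 2)) = ε / 4 := by
          rw [hε₁def]
          field_simp
          ring
        nlinarith
      calc |Rn n ω t - R t|
          ≤ |Rn n ω t - Rn n ω i| + |Rn n ω i - R t| := abs_sub_le _ _ _
        _ ≤ |Rn n ω t - Rn n ω i| + (|Rn n ω i - R i| + |R i - R t|) :=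
            add_le_add_right (abs_sub_le _ _ _) _
        _ ≤ ε₁ * mn n ω + ε / 8 + ε₁ * MS := by
            have : |R i - R t| = |R t - R i| := abs_sub_comm _ _
            rw [this]
            linarith [hA, hB, le_of_lt hC']
        _ ≤ ε / 4 + ε / 8 := by linarith
        _ = 3 * ε / 8 := by ring
    have hkey := key n ω (3 * ε / 8) (by linarith) hD
    have : dist (R (θ n ω)) (⨅ t : K, R t) ≤ 3 * ε / 4 := by
      rw [Real.dist_eq]
      linarith
    have hω' : ε ≤ dist (R (θ n ω)) (⨅ t : K, R t) := hω
    linarith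
  -- convergence of each event probability
  have hE : ∀ t : K, Tendsto (fun n => P (E t n)) atTop (𝓝 0) := by
    intro t
    have := tendstoInMeasure_iff_dist.mp (hconv (fun a => c t a) (hc_t t)) (ε / 8) (by linarith)
    exact this
  have hEm : Tendsto (fun n => P (Em n)) atTop (𝓝 0) := by
    have h1 := tendstoInMeasure_iff_dist.mp (hconv (fun _ => (1 : ℝ)) continuous_const) 1 one_pos
    have heq : ∀ n : ℕ, {ω | (1:ℝ) ≤ dist (∫ _, (1:ℝ) ∂(Shat n ω)) (∫ _, (1:ℝ) ∂S)} = Em n := by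
      intro n
      ext ω
      haveI := hShat_fin n ω
      simp [hEmdef, integral_const, hmndef, hMSdef, Measure.real]
    simpa only [heq] using h1
  have hsum : Tendsto (fun n => (∑ t ∈ F, P (E t n)) + P (Em n)) atTop (𝓝 0) := by
    have h1 : Tendsto (fun n => ∑ t ∈ F, P (E t n)) atTop (𝓝 0) := by
      have := tendsto_finset_sum F (fun t _ => hE t)
      simpa using this
    have := h1.add hEm
    simpa using this
  refine tendsto_of_tendsto_of_tendsto_of_le_of_le tendsto_const_nhds hsum
    (fun n => zero_le) (fun n => ?_)
  calc P {ω | ε ≤ dist (R (θ n ω)) (⨅ t : K, R t)}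
      ≤ P ((⋃ t ∈ F, E t n) ∪ Em n) := measure_mono (hincl n)
    _ ≤ P (⋃ t ∈ F, E t n) + P (Em n) := measure_union_le _ _
    _ ≤ (∑ t ∈ F, P (E t n)) + P (Em n) :=
        add_le_add_left (measure_biUnion_finset_le F _) _
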